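/- Vertex addition preserves bearing rigidity: suppose (G, p) is a bearing rigid network in R^d with n nodes, and form G' by adding a new vertex v connected to two existing vertices i and j. If p_v is any point such that p_i, p_j, p_v are not collinear (and p_v is distinct from all p_k), then the network (G', (p, p_v)) is bearing rigid, i.e., its bearing Laplacian has rank d(n+1) - d - 1. -/

import Mathlib

open Matrix

open scoped Classical in
/-- The orthogonal projection matrix `P(x) = I - x xᵀ / ‖x‖²`. -/
noncomputable def proj {d : ℕ} (x : Fin d → ℝ) : Matrix (Fin d) (Fin d) ℝ :=
  1 - (x ⬝ᵥ x)⁻¹ • Matrix.vecMulVec x x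


section ProjLemmas
variable {d : ℕ}

lemma vecMulVec_mulVec' (x y z : Fin d → ℝ) :
    Matrix.vecMulVec x y *ᵥ z = (y ⬝ᵥ z) • x := by
  ext i
  simp [Matrix.mulVec, dotProduct, Matrix.vecMulVec_apply, Finset.mul_sum,
    mul_comm, mul_left_comm]

lemma proj_mulVec (x z : Fin d → ℝ) :
    proj x *ᵥ z = z - ((x ⬝ᵥ x)⁻¹ * (x ⬝ᵥ z)) • x := by
  rw [proj, Matrix.sub_mulVec, Matrix.one_mulVec, Matrix.smul_mulVec,
    vecMulVec_mulVec', smul_smul]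

lemma proj_mulVec_self (x : Fin d → ℝ) : proj x *ᵥ x = 0 := by
  rcases eq_or_ne x 0 with h | h
  · simp [h, proj_mulVec]
  · have hx : x ⬝ᵥ x ≠ 0 := fun h0 => h (dotProduct_self_eq_zero.mp h0)
    rw [proj_mulVec, inv_mul_cancel₀ hx, one_smul, sub_self]

lemma proj_neg (x : Fin d → ℝ) : proj (-x) = proj x := by
  have h1 : Matrix.vecMulVec (-x) (-x) = Matrix.vecMulVec x x := by
    ext i j; simp [Matrix.vecMulVec_apply]
  have h2 : (-x) ⬝ᵥ (-x) = x ⬝ᵥ x := by simp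
  rw [proj, proj, h1, h2]

lemma proj_transpose (x : Fin d → ℝ) : (proj x)ᵀ = proj x := by
  simp [proj, Matrix.transpose_sub, Matrix.transpose_smul]

lemma vecMulVec_mul_self (x : Fin d → ℝ) :
    Matrix.vecMulVec x x * Matrix.vecMulVec x x = (x ⬝ᵥ x) • Matrix.vecMulVec x x := by
  ext i j
  simp [Matrix.mul_apply, Matrix.vecMulVec_apply, dotProduct, Finset.sum_mul,
    Finset.mul_sum]
  congr 1; ext k; ring

lemma proj_idem (x : Fin d → ℝ) : proj x * proj x = proj x := by
  rcases eq_or_ne (x ⬝ᵥ x) 0 with h | h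
  · simp [proj, h]
  · simp only [proj, sub_mul, mul_sub, one_mul, mul_one, Matrix.mul_smul, Matrix.smul_mul,
      vecMulVec_mul_self, smul_smul]
    rw [inv_mul_cancel₀ h]
    ring_nf
    abel

lemma proj_dot (x z : Fin d → ℝ) :
    z ⬝ᵥ (proj x *ᵥ z) = (proj x *ᵥ z) ⬝ᵥ (proj x *ᵥ z) := by
  conv_lhs => rw [← proj_idem x, ← Matrix.mulVec_mulVec]
  rw [Matrix.dotProduct_mulVec, ← proj_transpose x, Matrix.vecMul_transpose, proj_transpose]

lemma proj_dot_nonneg (x z : Fin d → ℝ) : 0 ≤ z ⬝ᵥ (proj x *ᵥ z) := by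
  rw [proj_dot, dotProduct]
  exact Finset.sum_nonneg fun k _ => mul_self_nonneg _

lemma proj_mem_span (x z : Fin d → ℝ) (h : proj x *ᵥ z = 0) : ∃ c : ℝ, z = c • x := by
  rw [proj_mulVec] at h
  exact ⟨(x ⬝ᵥ x)⁻¹ * (x ⬝ᵥ z), by linear_combination (norm := module) h⟩

end ProjLemmas


open scoped Classical in
/-- The bearing Laplacian of the network `(G, p)`: the `dn × dn` block matrix with
`[L]_{ij} = -P(g_{ij})` for edges `(i,j)`, `0` for non-adjacent `i ≠ j`, and
`[L]_{ii} = ∑_{j ∈ N_i} P(g_{ij})`.  Since `proj` is scale-invariant,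
`proj (p j - p i) = P(g_{ij})` for the unit bearing `g_{ij}`. -/
noncomputable def bearingLaplacian {V : Type*} [Fintype V] {d : ℕ}
    (G : SimpleGraph V) (p : V → Fin d → ℝ) :
    Matrix (V × Fin d) (V × Fin d) ℝ :=
  fun q r =>
    if q.1 = r.1 then
      (∑ k ∈ Finset.univ.filter (fun k => G.Adj q.1 k), proj (p k - p q.1)) q.2 r.2
    else if G.Adj q.1 r.1 then -(proj (p r.1 - p q.1) q.2 r.2) else 0


section Laplacian
variable {V : Type*} [Fintype V] {d : ℕ} (G : SimpleGraph V) (p : V → Fin d → ℝ)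

open scoped Classical in
lemma bearing_mulVec (u : V × Fin d → ℝ) (q : V × Fin d) :
    (bearingLaplacian G p *ᵥ u) q =
      ∑ k ∈ Finset.univ.filter (fun k => G.Adj q.1 k),
        (proj (p k - p q.1) *ᵥ (fun t => u (q.1, t) - u (k, t))) q.2 := by
  classical
  set N := Finset.univ.filter (fun k => G.Adj q.1 k) with hN
  have hqN : q.1 ∉ N := by simp [hN]
  have hL : (bearingLaplacian G p *ᵥ u) q
      = ∑ r1 : V, ∑ r2 : Fin d, bearingLaplacian G p q (r1, r2) * u (r1, r2) := by
    simp [Matrix.mulVec, dotProduct, Fintype.sum_prod_type]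
  have hzero : ∀ r1 ∈ Finset.univ, r1 ∉ ({q.1} ∪ N : Finset V) →
      (∑ r2 : Fin d, bearingLaplacian G p q (r1, r2) * u (r1, r2)) = 0 := by
    intro r1 _ hr1
    simp only [Finset.mem_union, Finset.mem_singleton, hN, Finset.mem_filter,
      Finset.mem_univ, true_and, not_or] at hr1
    refine Finset.sum_eq_zero fun r2 _ => ?_
    rw [bearingLaplacian]
    simp [Ne.symm hr1.1, hr1.2]
  rw [hL, ← Finset.sum_subset (Finset.subset_univ ({q.1} ∪ N)) hzero,
    Finset.sum_union (by simpa using hqN)]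
  have hdiag : ∑ r1 ∈ {q.1}, ∑ r2 : Fin d, bearingLaplacian G p q (r1, r2) * u (r1, r2)
      = ∑ k ∈ N, ∑ r2 : Fin d, proj (p k - p q.1) q.2 r2 * u (q.1, r2) := by
    rw [Finset.sum_singleton]
    have : ∀ r2 : Fin d, bearingLaplacian G p q (q.1, r2) * u (q.1, r2)
        = ∑ k ∈ N, proj (p k - p q.1) q.2 r2 * u (q.1, r2) := by
      intro r2
      rw [bearingLaplacian]
      simp only [if_pos rfl, ← hN, if_true, reduceIte, Matrix.sum_apply, Finset.sum_mul]
    rw [Finset.sum_congr rfl fun r2 _ => this r2, Finset.sum_comm]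
  have hoff : ∑ r1 ∈ N, ∑ r2 : Fin d, bearingLaplacian G p q (r1, r2) * u (r1, r2)
      = ∑ k ∈ N, ∑ r2 : Fin d, -(proj (p k - p q.1) q.2 r2 * u (k, r2)) := by
    refine Finset.sum_congr rfl fun k hk => Finset.sum_congr rfl fun r2 _ => ?_
    have hadj : G.Adj q.1 k := by simpa [hN] using hk
    have hne : q.1 ≠ k := fun h => by subst h; exact hadj.ne rfl
    rw [bearingLaplacian]
    simp [hne, hadj]
  rw [hdiag, hoff, ← Finset.sum_add_distrib]
  refine Finset.sum_congr rfl fun k hk => ?_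
  simp [Matrix.mulVec, dotProduct, mul_sub, sub_eq_add_neg, mul_add, mul_neg,
    Finset.sum_add_distrib, Finset.sum_neg_distrib]

open scoped Classical in
lemma bearing_quad (u : V × Fin d → ℝ) :
    u ⬝ᵥ (bearingLaplacian G p *ᵥ u) =
      ∑ e : V × V, (if G.Adj e.1 e.2 then
        (fun s => u (e.1, s)) ⬝ᵥ (proj (p e.2 - p e.1) *ᵥ (fun t => u (e.1, t) - u (e.2, t)))
        else 0) := by
  classical
  rw [dotProduct, Fintype.sum_prod_type, Fintype.sum_prod_type]
  refine Finset.sum_congr rfl fun a _ => ?_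
  have : ∀ s : Fin d, u (a, s) * (bearingLaplacian G p *ᵥ u) (a, s)
      = ∑ k : V, (if G.Adj a k then
          u (a, s) * (proj (p k - p a) *ᵥ (fun t => u (a, t) - u (k, t))) s else 0) := by
    intro s
    rw [bearing_mulVec, Finset.mul_sum, Finset.sum_filter]
  rw [Finset.sum_congr rfl fun s _ => this s, Finset.sum_comm]
  refine Finset.sum_congr rfl fun k _ => ?_
  by_cases h : G.Adj a k <;> simp [h, dotProduct]

open scoped Classical in
lemma bearing_kernel_iff (u : V × Fin d → ℝ) :
    bearingLaplacian G p *ᵥ u = 0 ↔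
      ∀ a b, G.Adj a b →
        proj (p b - p a) *ᵥ (fun t => u (a, t) - u (b, t)) = 0 := by
  classical
  constructor
  · intro hu
    have hquad : u ⬝ᵥ (bearingLaplacian G p *ᵥ u) = 0 := by rw [hu, dotProduct_zero]
    have hPswap : ∀ a b : V, proj (p a - p b) = proj (p b - p a) := by
      intro a b
      have : p a - p b = -(p b - p a) := by abel
      rw [this, proj_neg]
    have hswap : (∑ e : V × V, (if G.Adj e.1 e.2 then
          (fun s => u (e.1, s)) ⬝ᵥ (proj (p e.2 - p e.1) *ᵥ (fun t => u (e.1, t) - u (e.2, t)))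
          else 0))
        = ∑ e : V × V, (if G.Adj e.1 e.2 then
          -((fun s => u (e.2, s)) ⬝ᵥ (proj (p e.2 - p e.1) *ᵥ (fun t => u (e.1, t) - u (e.2, t))))
          else 0) := by
      rw [Fintype.sum_prod_type, Finset.sum_comm]
      conv_rhs => rw [Fintype.sum_prod_type]
      refine Finset.sum_congr rfl fun a _ => Finset.sum_congr rfl fun b _ => ?_
      simp only
      by_cases h : G.Adj a b
      · rw [if_pos h.symm, if_pos h]
        have h1 : (fun t => u (b, t) - u (a, t)) = -(fun t => u (a, t) - u (b, t)) := by
          funext t; simp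
        rw [hPswap b a, h1, Matrix.mulVec_neg, dotProduct_neg]
      · rw [if_neg (fun h2 => h h2.symm), if_neg h]
    have hsum2 : ∑ e : V × V, (if G.Adj e.1 e.2 then
        (fun t => u (e.1, t) - u (e.2, t)) ⬝ᵥ
          (proj (p e.2 - p e.1) *ᵥ (fun t => u (e.1, t) - u (e.2, t))) else 0) = 0 := by
      have h2 : (2 : ℝ) * (u ⬝ᵥ (bearingLaplacian G p *ᵥ u))
          = ∑ e : V × V, (if G.Adj e.1 e.2 then
          (fun t => u (e.1, t) - u (e.2, t)) ⬝ᵥ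
            (proj (p e.2 - p e.1) *ᵥ (fun t => u (e.1, t) - u (e.2, t))) else 0) := by
        rw [two_mul]
        nth_rewrite 1 [bearing_quad G p u]
        nth_rewrite 1 [bearing_quad G p u]
        nth_rewrite 2 [hswap]
        rw [← Finset.sum_add_distrib]
        refine Finset.sum_congr rfl fun e _ => ?_
        by_cases h : G.Adj e.1 e.2
        · simp only [if_pos h]
          rw [← sub_eq_add_neg, ← sub_dotProduct]
          congr 1
        · simp [h]
      rw [← h2, hquad, mul_zero]
    have hterm : ∀ e : V × V, G.Adj e.1 e.2 →
        (fun t => u (e.1, t) - u (e.2, t)) ⬝ᵥ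
          (proj (p e.2 - p e.1) *ᵥ (fun t => u (e.1, t) - u (e.2, t))) = 0 := by
      have hz := (Finset.sum_eq_zero_iff_of_nonneg (fun e _ => ?_)).mp hsum2
      · intro e he
        have := hz e (Finset.mem_univ e)
        rwa [if_pos he] at this
      · by_cases h : G.Adj e.1 e.2
        · rw [if_pos h]; exact proj_dot_nonneg _ _
        · rw [if_neg h]
    intro a b hab
    have h0 := hterm (a, b) hab
    simp only at h0
    rw [proj_dot] at h0
    exact dotProduct_self_eq_zero.mp h0
  · intro h
    funext q
    rw [bearing_mulVec]
    refine Finset.sum_eq_zero fun k hk => ?_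
    have hadj : G.Adj q.1 k := by simpa using hk
    rw [h q.1 k hadj]
    rfl

noncomputable def psiMap (p : V → Fin d → ℝ) : ((Fin d → ℝ) × ℝ) →ₗ[ℝ] (V × Fin d → ℝ) where
  toFun wc := fun q => wc.1 q.2 + wc.2 * p q.1 q.2
  map_add' wc₁ wc₂ := by funext q; simp; ring
  map_smul' r wc := by funext q; simp; ring

lemma psi_range_le_ker :
    LinearMap.range (psiMap p) ≤ LinearMap.ker (bearingLaplacian G p).mulVecLin := by
  rintro x ⟨⟨w, c⟩, rfl⟩
  rw [LinearMap.mem_ker, Matrix.mulVecLin_apply, bearing_kernel_iff]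
  intro a b hab
  have hx : (fun t => psiMap p (w, c) (a, t) - psiMap p (w, c) (b, t))
      = (-c) • (p b - p a) := by
    funext t; simp [psiMap]; ring
  rw [hx, Matrix.mulVec_smul, proj_mulVec_self, smul_zero]

omit [Fintype V] in
lemma psi_inj {a b : V} (hab : p a ≠ p b) : Function.Injective (psiMap p) := by
  rw [← LinearMap.ker_eq_bot, LinearMap.ker_eq_bot']
  rintro ⟨w, c⟩ h
  have h1 : ∀ q : V × Fin d, w q.2 + c * p q.1 q.2 = 0 := fun q => congrFun h q
  have hc : c = 0 := by
    by_contra hc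
    apply hab
    funext t
    have ha := h1 (a, t)
    have hb := h1 (b, t)
    simp only at ha hb
    have : c * (p a t - p b t) = 0 := by linarith
    rcases mul_eq_zero.mp this with h' | h'
    · exact absurd h' hc
    · linarith
  have hw : w = 0 := by
    funext t
    have := h1 (a, t)
    simp only [hc, zero_mul, add_zero] at this
    exact this
  simp [hw, hc]

lemma psi_finrank {a b : V} (hab : p a ≠ p b) :
    Module.finrank ℝ (LinearMap.range (psiMap p)) = d + 1 := by
  rw [LinearMap.finrank_range_of_inj (psi_inj p hab)]
  rw [Module.finrank_prod, Module.finrank_pi, Module.finrank_self, Fintype.card_fin]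

end Laplacian

lemma collinear_aux {d : ℕ} {A B C : Fin d → ℝ}
    (hcol : ¬ Collinear ℝ ({A, B, C} : Set (Fin d → ℝ)))
    {z : Fin d → ℝ} {a b : ℝ} (ha : z = a • (A - C)) (hb : z = b • (B - C)) :
    z = 0 := by
  by_contra hz
  have ha0 : a ≠ 0 := fun h => hz (by simp [ha, h])
  apply hcol
  rw [collinear_iff_of_mem (show C ∈ ({A, B, C} : Set (Fin d → ℝ)) by simp)]
  refine ⟨B - C, fun q hq => ?_⟩
  rcases hq with h | h | h
  · subst h
    refine ⟨a⁻¹ * b, ?_⟩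
    have h1 : q - C = (a⁻¹ * b) • (B - C) := by
      rw [mul_smul, ← hb, ha, inv_smul_smul₀ ha0]
    rw [vadd_eq_add, ← h1]
    abel
  · subst h
    refine ⟨1, by rw [vadd_eq_add, one_smul]; abel⟩
  · rw [Set.mem_singleton_iff] at h
    subst h
    exact ⟨0, by rw [vadd_eq_add, zero_smul, zero_add]⟩

lemma ker_eq_range {V : Type*} [Fintype V] {d : ℕ} (G : SimpleGraph V) (p : V → Fin d → ℝ)
    (hk : Module.finrank ℝ (LinearMap.ker (bearingLaplacian G p).mulVecLin) ≤ d + 1)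
    {a b : V} (hab : p a ≠ p b) :
    LinearMap.ker (bearingLaplacian G p).mulVecLin = LinearMap.range (psiMap p) :=
  (Submodule.eq_of_le_of_finrank_le (psi_range_le_ker G p)
    (by rw [psi_finrank p hab]; exact hk)).symm


theorem stmt14 {n d : ℕ} (hd : 2 ≤ d) (G : SimpleGraph (Fin n))
    (p : Fin n → Fin d → ℝ) (hp : Function.Injective p)
    (hrigid : (bearingLaplacian G p).rank = d * n - d - 1)
    (i j : Fin n) (hij : i ≠ j) (pv : Fin d → ℝ)
    (hpv : ∀ k, pv ≠ p k)
    (hcol : ¬ Collinear ℝ ({p i, p j, pv} : Set (Fin d → ℝ))) :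
    (bearingLaplacian
      (SimpleGraph.fromRel (fun a b : Option (Fin n) =>
        (∃ x y, a = some x ∧ b = some y ∧ G.Adj x y) ∨
        (a = none ∧ (b = some i ∨ b = some j))))
      (fun o => o.elim pv p)).rank = d * (n + 1) - d - 1 := by
  classical
  set G' : SimpleGraph (Option (Fin n)) :=
    SimpleGraph.fromRel (fun a b : Option (Fin n) =>
        (∃ x y, a = some x ∧ b = some y ∧ G.Adj x y) ∨
        (a = none ∧ (b = some i ∨ b = some j))) with hG'
  set p' : Option (Fin n) → Fin d → ℝ := fun o => o.elim pv p with hp'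
  -- basic facts
  have hpij : p i ≠ p j := fun h => hij (hp h)
  have hn2 : 2 ≤ n := by
    rcases i with ⟨iv, hiv⟩; rcases j with ⟨jv, hjv⟩
    have : iv ≠ jv := by simpa [Fin.ext_iff] using hij
    omega
  -- adjacency facts
  have hG'ss : ∀ a b : Fin n, G'.Adj (some a) (some b) ↔ G.Adj a b := by
    intro a b
    rw [hG', SimpleGraph.fromRel_adj]
    constructor
    · rintro ⟨hne, (⟨x, y, hx, hy, hxy⟩ | ⟨h, -⟩) | (⟨x, y, hx, hy, hxy⟩ | ⟨h, -⟩)⟩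
      · cases hx; cases hy; exact hxy
      · exact absurd h (by simp)
      · cases hx; cases hy; exact hxy.symm
      · exact absurd h (by simp)
    · intro h
      exact ⟨by simpa using h.ne, Or.inl (Or.inl ⟨a, b, rfl, rfl, h⟩)⟩
  have hG'ni : G'.Adj none (some i) := by
    rw [hG', SimpleGraph.fromRel_adj]
    exact ⟨by simp, Or.inl (Or.inr ⟨rfl, Or.inl rfl⟩)⟩
  have hG'nj : G'.Adj none (some j) := by
    rw [hG', SimpleGraph.fromRel_adj]
    exact ⟨by simp, Or.inl (Or.inr ⟨rfl, Or.inr rfl⟩)⟩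
  -- finrank of old kernel
  have hdn : d + 2 ≤ d * n := by nlinarith
  have hrn := LinearMap.finrank_range_add_finrank_ker (bearingLaplacian G p).mulVecLin
  have htot : Module.finrank ℝ (Fin n × Fin d → ℝ) = d * n := by
    rw [Module.finrank_pi, Fintype.card_prod, Fintype.card_fin, Fintype.card_fin, mul_comm]
  rw [htot] at hrn
  rw [Matrix.rank] at hrigid
  have hker : Module.finrank ℝ (LinearMap.ker (bearingLaplacian G p).mulVecLin) = d + 1 := by
    omega
  have hkerL : LinearMap.ker (bearingLaplacian G p).mulVecLin = LinearMap.range (psiMap p) :=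
    ker_eq_range G p (le_of_eq hker) hpij
  -- new kernel equals range of psiMap p'
  have hp'ij : p' (some i) ≠ p' (some j) := hpij
  have hkerL' : LinearMap.ker (bearingLaplacian G' p').mulVecLin =
      LinearMap.range (psiMap p') := by
    refine le_antisymm ?_ (psi_range_le_ker G' p')
    intro u hu
    rw [LinearMap.mem_ker, Matrix.mulVecLin_apply, bearing_kernel_iff] at hu
    set u₀ : Fin n × Fin d → ℝ := fun q => u (some q.1, q.2) with hu₀def
    have hu₀ : u₀ ∈ LinearMap.ker (bearingLaplacian G p).mulVecLin := by
      rw [LinearMap.mem_ker, Matrix.mulVecLin_apply, bearing_kernel_iff]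
      intro a b hab
      exact hu (some a) (some b) ((hG'ss a b).mpr hab)
    rw [hkerL] at hu₀
    obtain ⟨⟨w, c⟩, hwc⟩ := hu₀
    have hwc' : ∀ q : Fin n × Fin d, u (some q.1, q.2) = w q.2 + c * p q.1 q.2 :=
      fun q => (congrFun hwc q).symm
    -- constraints at the new vertex
    obtain ⟨ci, hci⟩ := proj_mem_span _ _ (hu none (some i) hG'ni)
    obtain ⟨cj, hcj⟩ := proj_mem_span _ _ (hu none (some j) hG'nj)
    set z : Fin d → ℝ := fun t => u (none, t) - (w t + c * pv t) with hzdef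
    have hz1 : z = (ci + c) • (p i - pv) := by
      funext t
      have h1 := congrFun hci t
      have h2 := hwc' (i, t)
      simp only [hzdef, Pi.smul_apply, Pi.sub_apply, smul_eq_mul] at h1 h2 ⊢
      have : u (none, t) - u (some i, t) = ci * (p i t - pv t) := h1
      rw [h2] at this
      linarith [this]
    have hz2 : z = (cj + c) • (p j - pv) := by
      funext t
      have h1 := congrFun hcj t
      have h2 := hwc' (j, t)
      simp only [hzdef, Pi.smul_apply, Pi.sub_apply, smul_eq_mul] at h1 h2 ⊢
      have : u (none, t) - u (some j, t) = cj * (p j t - pv t) := h1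
      rw [h2] at this
      linarith [this]
    have hz0 : z = 0 := collinear_aux hcol hz1 hz2
    refine ⟨(w, c), ?_⟩
    funext q
    obtain ⟨o, t⟩ := q
    cases o with
    | none =>
      have := congrFun hz0 t
      simp only [hzdef, Pi.zero_apply] at this
      show w t + c * pv t = u (none, t)
      linarith [this]
    | some k =>
      show w t + c * p k t = u (some k, t)
      rw [hwc' (k, t)]
  -- final rank computation
  have hrn' := LinearMap.finrank_range_add_finrank_ker (bearingLaplacian G' p').mulVecLin
  have htot' : Module.finrank ℝ (Option (Fin n) × Fin d → ℝ) = d * (n + 1) := by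
    rw [Module.finrank_pi, Fintype.card_prod, Fintype.card_option, Fintype.card_fin,
      Fintype.card_fin, mul_comm]
  rw [htot', hkerL', psi_finrank p' hp'ij] at hrn'
  rw [Matrix.rank]
  have hdn' : d + 2 ≤ d * (n + 1) := by nlinarith
  omega
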